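/- arXiv:2205.06715 — 2 statements merged into one kernel-verified Lean document; each statement's English description precedes it below -/
import Mathlib

section
/- Let $\mathcal{P}$ be a finite collection of unit cells in $\mathbb{Z}^2$, and for each cell $C = [a, a+(1,1)]$ with anti-diagonal corners $c = a+(1,0)$ and $d = a+(0,1)$, define the vector $v_C = e_a + e_{a+(1,1)} - e_c - e_d$ in the free $\mathbb{Q}$-vector space $\mathbb{Q}^{V(\mathcal{P})}$ on the vertex set of $\mathcal{P}$. Then the vectors $\{v_C : C \in \mathcal{P}\}$ are linearly independent over $\mathbb{Q}$. -/
/-- The vector `e_a + e_{a+(1,1)} - e_{a+(1,0)} - e_{a+(0,1)}` attached to the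
cell with lower-left corner `a`. -/
noncomputable def cellVector (a : ℤ × ℤ) : (ℤ × ℤ) →₀ ℚ :=
  Finsupp.single a 1 + Finsupp.single (a + (1, 1)) 1
    - Finsupp.single (a + (1, 0)) 1 - Finsupp.single (a + (0, 1)) 1

namespace CellVectorAux

abbrev R := AddMonoidAlgebra ℚ (ℤ × ℤ)

noncomputable def g : R := AddMonoidAlgebra.ofCoeff (cellVector 0)

lemma cell_eq (a : ℤ × ℤ) :
    AddMonoidAlgebra.ofCoeff (cellVector a) = AddMonoidAlgebra.single a (1:ℚ) * g := by
  have hg : g = AddMonoidAlgebra.single (0:ℤ×ℤ) (1:ℚ) + AddMonoidAlgebra.single ((1,1):ℤ×ℤ) 1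
      - AddMonoidAlgebra.single ((1,0):ℤ×ℤ) 1 - AddMonoidAlgebra.single ((0,1):ℤ×ℤ) 1 := by
    simp only [g, cellVector, AddMonoidAlgebra.ofCoeff_sub, AddMonoidAlgebra.ofCoeff_add, AddMonoidAlgebra.ofCoeff_single, zero_add]
  rw [hg]
  simp only [cellVector, AddMonoidAlgebra.ofCoeff_sub, AddMonoidAlgebra.ofCoeff_add, AddMonoidAlgebra.ofCoeff_single]
  rw [mul_sub, mul_sub, mul_add]
  simp only [AddMonoidAlgebra.single_mul_single, mul_one, add_zero]

lemma g_ne : g ≠ 0 := by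
  intro h
  have h2 : g.coeff ((1,1) : ℤ × ℤ) = 0 := by rw [h]; rfl
  simp [g, cellVector, AddMonoidAlgebra.coeff_ofCoeff, Finsupp.single_apply, Prod.ext_iff] at h2

lemma key (P : Finset (ℤ × ℤ)) :
    LinearIndependent ℚ (fun a : P => AddMonoidAlgebra.ofCoeff (cellVector a)) := by
  set T : R →ₗ[ℚ] R := LinearMap.mulRight ℚ g with hT
  have hinj : Function.Injective T := fun x y h => by
    simp only [hT, LinearMap.mulRight_apply] at h
    exact mul_right_cancel₀ g_ne h
  have hb : LinearIndependent ℚ (fun a : P => AddMonoidAlgebra.single (a:ℤ×ℤ) (1:ℚ)) :=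
    (Finsupp.basisSingleOne (R := ℚ) (ι := ℤ × ℤ)).linearIndependent.comp
      Subtype.val Subtype.val_injective |>.map' (AddMonoidAlgebra.coeffLinearEquiv ℚ).symm.toLinearMap (LinearEquiv.ker _)
  have h := hb.map' T (LinearMap.ker_eq_bot.2 hinj)
  convert h using 1
  funext a
  show _ = T _
  rw [hT, LinearMap.mulRight_apply]
  exact cell_eq a
  · rfl
  · rfl

end CellVectorAux

theorem cellVectors_linearIndependent (P : Finset (ℤ × ℤ)) :
    LinearIndependent ℚ (fun a : P => cellVector a) := by
  exact (CellVectorAux.key P).map' (AddMonoidAlgebra.coeffLinearEquiv ℚ).toLinearMap (LinearEquiv.ker _)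
end

section
/- Let $G$ be a finite simple graph on vertex set $[n]$ with $c$ connected components, and let $J_G \subset K[x_1,\ldots,x_n,y_1,\ldots,y_n]$ be its binomial edge ideal, generated by $x_i y_j - x_j y_i$ for edges $\{i,j\}$ with $i < j$. Let $V_{J_G} \subseteq \mathbb{Q}^{2n}$ be the $\mathbb{Q}$-span of the vectors $v - w$ such that $x^v - x^w \in J_G$ (with $x^v$ monomials in all $2n$ variables). Then $\dim_{\mathbb{Q}} V_{J_G} = n - c$. -/
open MvPolynomial

/-- The binomial edge ideal of a graph `G` on `n` vertices, in
`K[x_1,…,x_n,y_1,…,y_n]`; the `x`-variables are indexed by `Sum.inl`, the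
`y`-variables by `Sum.inr`. -/
noncomputable def binomialEdgeIdeal (K : Type*) [Field K] {n : ℕ}
    (G : SimpleGraph (Fin n)) : Ideal (MvPolynomial (Fin n ⊕ Fin n) K) :=
  Ideal.span {f | ∃ i j : Fin n, G.Adj i j ∧
    f = X (Sum.inl i) * X (Sum.inr j) - X (Sum.inl j) * X (Sum.inr i)}

/-- The `ℚ`-vector space spanned by the exponent-difference vectors of the
binomials contained in an ideal of a polynomial ring. -/
noncomputable def binomialVectorSpace {K : Type*} [Field K] {σ : Type*}
    (I : Ideal (MvPolynomial σ K)) : Submodule ℚ (σ → ℚ) :=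
  Submodule.span ℚ {u : σ → ℚ | ∃ v w : σ →₀ ℕ,
    monomial v (1 : K) - monomial w 1 ∈ I ∧ u = fun i => (v i : ℚ) - (w i : ℚ)}

section Aux

open Finset Sum

variable {n : ℕ} (G : SimpleGraph (Fin n))

open scoped Classical in
/-- The linear map taking `z : ℚ^n` to its sums over connected components. -/
noncomputable def compSum : (Fin n → ℚ) →ₗ[ℚ] (G.ConnectedComponent → ℚ) where
  toFun z := fun C => ∑ i, if G.connectedComponentMk i = C then z i else 0
  map_add' z₁ z₂ := by
    funext C
    rw [Pi.add_apply, ← Finset.sum_add_distrib]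
    exact Finset.sum_congr rfl fun i _ => by by_cases h : G.connectedComponentMk i = C <;>
      simp [h]
  map_smul' c z := by
    funext C
    simp only [Pi.smul_apply, smul_eq_mul, RingHom.id_apply, Finset.mul_sum]
    exact Finset.sum_congr rfl fun i _ => by by_cases h : G.connectedComponentMk i = C <;>
      simp [h]

open scoped Classical in
lemma compSum_apply (z : Fin n → ℚ) (C : G.ConnectedComponent) :
    compSum G z C = ∑ i, if G.connectedComponentMk i = C then z i else 0 := rfl

open scoped Classical in
lemma compSum_single (i : Fin n) (a : ℚ) :
    compSum G (Pi.single i a) = Pi.single (G.connectedComponentMk i) a := by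
  funext C
  rw [compSum_apply, Finset.sum_eq_single i]
  · simp [Pi.single_apply, eq_comm]
  · intro j _ hj
    simp [Pi.single_apply, hj]
  · simp

/-- The span of the edge vectors `e_i - e_j`. -/
noncomputable def edgeSpan : Submodule ℚ (Fin n → ℚ) :=
  Submodule.span ℚ {z | ∃ i j : Fin n, G.Adj i j ∧ z = Pi.single i 1 - Pi.single j 1}

lemma edgeSpan_eq_ker : edgeSpan G = LinearMap.ker (compSum G) := by
  classical
  apply le_antisymm
  · rw [edgeSpan, Submodule.span_le]
    rintro z ⟨i, j, hij, rfl⟩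
    rw [SetLike.mem_coe, LinearMap.mem_ker, map_sub, compSum_single, compSum_single,
      SimpleGraph.ConnectedComponent.sound hij.reachable, sub_self]
  · intro z hz
    rw [LinearMap.mem_ker] at hz
    set S := edgeSpan G with hS
    set π : (Fin n → ℚ) →ₗ[ℚ] _ := S.mkQ with hπ
    rw [← Submodule.ker_mkQ S, LinearMap.mem_ker, ← hπ]
    -- singles in the same component agree in the quotient
    have key : ∀ i j : Fin n, G.Reachable i j →
        π ((Pi.single i 1 : Fin n → ℚ)) = π ((Pi.single j 1 : Fin n → ℚ)) := by
      intro i j h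
      obtain ⟨w⟩ := h
      induction w with
      | nil => rfl
      | cons h p ih =>
        refine Eq.trans ?_ ih
        rw [hπ, Submodule.mkQ_apply, Submodule.mkQ_apply, Submodule.Quotient.eq]
        exact Submodule.subset_span ⟨_, _, h, rfl⟩
    have hrep : ∀ i : Fin n,
        π ((Pi.single i 1 : Fin n → ℚ)) =
        π ((Pi.single (Quot.out (G.connectedComponentMk i)) 1 : Fin n → ℚ)) := by
      intro i
      refine key _ _ ?_
      rw [← SimpleGraph.ConnectedComponent.eq]
      exact (Quot.out_eq _).symm
    have hz' : z = ∑ i, z i • (Pi.single i 1 : Fin n → ℚ) := by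
      funext j
      simp [Pi.single_apply, eq_comm]
    calc π z
        = ∑ i, z i • π ((Pi.single i 1 : Fin n → ℚ)) := by
          conv_lhs => rw [hz']
          rw [map_sum]
          exact Finset.sum_congr rfl fun i _ => by rw [map_smul]
      _ = ∑ i, z i • π ((Pi.single (Quot.out (G.connectedComponentMk i)) 1 : Fin n → ℚ)) := by
          exact Finset.sum_congr rfl fun i _ => by rw [hrep i]
      _ = ∑ C : G.ConnectedComponent, ∑ i ∈ univ.filter
            (fun i => G.connectedComponentMk i = C),
            z i • π ((Pi.single (Quot.out C) 1 : Fin n → ℚ)) := by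
          rw [← Finset.sum_fiberwise univ (fun i => G.connectedComponentMk i)
            (fun i => z i • π ((Pi.single (Quot.out (G.connectedComponentMk i)) 1 : Fin n → ℚ)))]
          refine Finset.sum_congr rfl fun C _ => Finset.sum_congr rfl fun i hi => ?_
          rw [Finset.mem_filter] at hi
          rw [hi.2]
      _ = 0 := by
          refine Finset.sum_eq_zero fun C _ => ?_
          rw [← Finset.sum_smul]
          have hC : ∑ i ∈ univ.filter (fun i => G.connectedComponentMk i = C), z i = 0 := by
            have := congrFun hz C
            rwa [compSum_apply, ← Finset.sum_filter, Pi.zero_apply] at this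
          rw [hC, zero_smul]

lemma compSum_surjective : Function.Surjective (compSum G) := by
  classical
  intro g
  refine ⟨∑ C : G.ConnectedComponent, g C • (Pi.single (Quot.out C) 1 : Fin n → ℚ), ?_⟩
  have hout : ∀ C : G.ConnectedComponent, G.connectedComponentMk (Quot.out C) = C :=
    fun C => Quot.out_eq C
  rw [map_sum]
  funext C
  simp only [map_smul, compSum_single, hout]
  rw [Finset.sum_apply]
  rw [Finset.sum_eq_single C]
  · simp
  · intro D _ hD
    simp [Pi.single_apply, hD.symm, Ne.symm hD]
  · simp

lemma finrank_ker_compSum :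
    Module.finrank ℚ (LinearMap.ker (compSum G)) = n - Nat.card G.ConnectedComponent := by
  classical
  have h := LinearMap.finrank_range_add_finrank_ker (compSum G)
  rw [LinearMap.range_eq_top.mpr (compSum_surjective G), finrank_top,
    Module.finrank_fintype_fun_eq_card, Module.finrank_fintype_fun_eq_card,
    Fintype.card_fin] at h
  rw [Nat.card_eq_fintype_card]
  omega

end Aux

section Main

open Finset Sum

variable (K : Type*) [Field K] {n : ℕ} (G : SimpleGraph (Fin n))

/-- The embedding `z ↦ (z, -z)` of `ℚ^n` into `ℚ^n × ℚ^n`. -/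
noncomputable def iotaMap (n : ℕ) : (Fin n → ℚ) →ₗ[ℚ] (Fin n ⊕ Fin n → ℚ) where
  toFun z := Sum.elim z (-z)
  map_add' z₁ z₂ := by funext a; cases a <;> simp [add_comm]
  map_smul' c z := by funext a; cases a <;> simp

lemma iotaMap_inl (z : Fin n → ℚ) (i : Fin n) : iotaMap n z (inl i) = z i := rfl

lemma iotaMap_inr (z : Fin n → ℚ) (i : Fin n) : iotaMap n z (inr i) = - z i := rfl

lemma iotaMap_injective : Function.Injective (iotaMap n) :=
  fun z z' h => funext fun i => congrFun h (inl i)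

/-- Exponent vectors of the images of the variables under the monomial map. -/
noncomputable def mExp : Fin n ⊕ Fin n →
    ((Fin n ⊕ (G.ConnectedComponent ⊕ G.ConnectedComponent)) →₀ ℕ) :=
  Sum.elim
    (fun i => Finsupp.single (inl i) 1 +
      Finsupp.single (inr (inl (G.connectedComponentMk i))) 1)
    (fun i => Finsupp.single (inl i) 1 +
      Finsupp.single (inr (inr (G.connectedComponentMk i))) 1)

/-- The monomial algebra map under which the binomial edge ideal vanishes. -/
noncomputable def phiG : MvPolynomial (Fin n ⊕ Fin n) K →ₐ[K]
    MvPolynomial (Fin n ⊕ (G.ConnectedComponent ⊕ G.ConnectedComponent)) K :=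
  aeval (fun a => monomial (mExp G a) 1)

lemma phiG_monomial (v : Fin n ⊕ Fin n →₀ ℕ) :
    phiG K G (monomial v (1 : K)) = monomial (v.sum fun a k => k • mExp G a) 1 := by
  rw [phiG, aeval_monomial, monomial_finsupp_sum_index, map_one, one_mul, C_1, one_mul]
  exact Finsupp.prod_congr fun a _ => by rw [monomial_pow, one_pow]

lemma ideal_le_ker :
    binomialEdgeIdeal K G ≤ RingHom.ker (phiG K G).toRingHom := by
  rw [binomialEdgeIdeal, Ideal.span_le]
  rintro f ⟨i, j, hij, rfl⟩
  rw [SetLike.mem_coe, RingHom.mem_ker]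
  simp only [AlgHom.toRingHom_eq_coe, RingHom.coe_coe, map_sub, map_mul, phiG, aeval_X]
  rw [monomial_mul, monomial_mul, one_mul, sub_eq_zero]
  have hcc := SimpleGraph.ConnectedComponent.sound hij.reachable
  apply congrArg (fun e => monomial e (1 : K))
  simp only [mExp, Sum.elim_inl, Sum.elim_inr, hcc]
  abel

lemma sum_coord (v : Fin n ⊕ Fin n →₀ ℕ)
    (t : Fin n ⊕ (G.ConnectedComponent ⊕ G.ConnectedComponent)) :
    (v.sum fun a k => k • mExp G a) t =
      ∑ j, v (inl j) * (mExp G (inl j) t) + ∑ j, v (inr j) * (mExp G (inr j) t) := by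
  classical
  rw [Finsupp.sum, Finset.sum_apply']
  rw [← Fintype.sum_sum_type (fun a => v a * mExp G a t)]
  rw [Finset.sum_subset (Finset.subset_univ v.support)]
  · exact Finset.sum_congr rfl fun a _ => by rw [Finsupp.smul_apply, smul_eq_mul]
  · intro a _ ha
    rw [Finsupp.notMem_support_iff] at ha
    simp [ha]

theorem dim_binomialVectorSpace_binomialEdgeIdeal' :
    binomialVectorSpace (binomialEdgeIdeal K G)
      = Submodule.map (iotaMap n) (LinearMap.ker (compSum G)) := by
  classical
  apply le_antisymm
  · rw [binomialVectorSpace, Submodule.span_le]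
    rintro u ⟨v, w, hvw, rfl⟩
    have hker := ideal_le_ker K G hvw
    rw [RingHom.mem_ker] at hker
    simp only [AlgHom.toRingHom_eq_coe, RingHom.coe_coe, map_sub, sub_eq_zero] at hker
    rw [phiG_monomial, phiG_monomial] at hker
    have hT := monomial_left_injective (one_ne_zero (α := K)) hker
    have h1 : ∀ i : Fin n, v (inl i) + v (inr i) = w (inl i) + w (inr i) := by
      intro i
      have h := congrArg (fun f : _ →₀ ℕ => f (inl i)) hT
      simp only [sum_coord] at h
      simpa [mExp, Finsupp.single_apply, mul_ite] using h
    have h2 : ∀ C : G.ConnectedComponent,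
        ∑ j, (if G.connectedComponentMk j = C then v (inl j) else 0)
          = ∑ j, (if G.connectedComponentMk j = C then w (inl j) else 0) := by
      intro C
      have h := congrArg (fun f : _ →₀ ℕ => f (inr (inl C))) hT
      simp only [sum_coord] at h
      simpa [mExp, Finsupp.single_apply, mul_ite] using h
    refine ⟨fun i => (v (inl i) : ℚ) - w (inl i), ?_, ?_⟩
    · rw [SetLike.mem_coe, LinearMap.mem_ker]
      funext C
      rw [compSum_apply, Pi.zero_apply]
      have hcast : ((∑ j, (if G.connectedComponentMk j = C then v (inl j) else 0) : ℕ) : ℚ)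
          = ((∑ j, (if G.connectedComponentMk j = C then w (inl j) else 0) : ℕ) : ℚ) := by
        exact congrArg _ (h2 C)
      push_cast at hcast
      calc ∑ i, (if G.connectedComponentMk i = C then (v (inl i) : ℚ) - w (inl i) else 0)
          = ∑ i, ((if G.connectedComponentMk i = C then (v (inl i) : ℚ) else 0)
              - (if G.connectedComponentMk i = C then (w (inl i) : ℚ) else 0)) := by
            refine Finset.sum_congr rfl fun i _ => ?_
            by_cases h : G.connectedComponentMk i = C <;> simp [h]
        _ = 0 := by rw [Finset.sum_sub_distrib, hcast, sub_self]
    · funext a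
      cases a with
      | inl i => rfl
      | inr i =>
        rw [iotaMap_inr]
        have := h1 i
        have hq : (v (inl i) : ℚ) + v (inr i) = (w (inl i) : ℚ) + w (inr i) := by
          exact_mod_cast congrArg (fun x : ℕ => (x : ℚ)) this
        linarith
  · rw [← edgeSpan_eq_ker, edgeSpan, Submodule.map_span, Submodule.span_le]
    rintro _ ⟨_, ⟨i, j, hij, rfl⟩, rfl⟩
    apply Submodule.subset_span
    refine ⟨Finsupp.single (inl i) 1 + Finsupp.single (inr j) 1,
      Finsupp.single (inl j) 1 + Finsupp.single (inr i) 1, ?_, ?_⟩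
    · apply Ideal.subset_span
      refine ⟨i, j, hij, ?_⟩
      rw [monomial_single_add, monomial_single_add, pow_one, pow_one]
      rfl
    · funext a
      have hne : i ≠ j := hij.ne
      cases a with
      | inl a =>
        rw [iotaMap_inl]
        simp only [Finsupp.add_apply, Finsupp.single_apply, Pi.sub_apply, Pi.single_apply]
        by_cases h1 : a = i <;> by_cases h2 : a = j <;>
          simp [h1, h2, hne, Ne.symm hne] <;> simp [Ne.symm h1, Ne.symm h2]
      | inr a =>
        rw [iotaMap_inr]
        simp only [Finsupp.add_apply, Finsupp.single_apply, Pi.sub_apply, Pi.single_apply]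
        by_cases h1 : a = i <;> by_cases h2 : a = j <;>
          simp [h1, h2, hne, Ne.symm hne] <;> simp [Ne.symm h1, Ne.symm h2]

end Main

theorem dim_binomialVectorSpace_binomialEdgeIdeal (K : Type*) [Field K] {n : ℕ}
    (G : SimpleGraph (Fin n)) :
    Module.finrank ℚ (binomialVectorSpace (binomialEdgeIdeal K G))
      = n - Nat.card G.ConnectedComponent := by
  classical
  rw [dim_binomialVectorSpace_binomialEdgeIdeal' K G,
    ← LinearEquiv.finrank_eq
      (Submodule.equivMapOfInjective (iotaMap n) iotaMap_injective
        (LinearMap.ker (compSum G))),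
    finrank_ker_compSum]
end
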